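/- Cocycle condition for the noncommutative K_{ℙ²} (gluing with trivial gerbe terms): extend the homomorphisms G_{21}, G_{32}, G_{13} of the previous statement to the double localizations, so that G_{21} : 𝒜_1⟨x_1^{-1}, y_1^{-1}⟩ → 𝒜_2⟨z_2^{-1}, y_2^{-1}⟩, G_{32} : 𝒜_2⟨z_2^{-1}, y_2^{-1}⟩ → 𝒜_3⟨x_3^{-1}, z_3^{-1}⟩ and G_{13} : 𝒜_3⟨x_3^{-1}, z_3^{-1}⟩ → 𝒜_1⟨y_1^{-1}, x_1^{-1}⟩. Then the composite G_{13} ∘ G_{32} ∘ G_{21} is the identity on 𝒜_1⟨x_1^{-1}, y_1^{-1}⟩; equivalently, G_{13}(G_{32}(G_{21}(u))) = u for u ∈ {x_1, y_1, w_1}. Hence the three charts 𝒜_1, 𝒜_2, 𝒜_3 together with the transition homomorphisms satisfy the cocycle condition G_{ij} ∘ G_{jk} = G_{ik} with trivial gerbe terms c_{ijk} = 1. -/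

import Mathlib

/-! Statement 17: cocycle condition for the noncommutative `K_{ℙ²}`. -/

/-- Generators `w₁, y₁, x₁` of `𝒜₁` together with adjoined inverses `x₁⁻¹, y₁⁻¹`. -/
inductive D1 : Type
  | w1 | y1 | x1 | xinv | yinv
deriving DecidableEq

/-- Generators `w₂, z₂, y₂` of `𝒜₂` together with adjoined inverses `z₂⁻¹, y₂⁻¹`. -/
inductive D2 : Type
  | w2 | z2 | y2 | zinv | yinv
deriving DecidableEq

/-- Generators `w₃, x₃, z₃` of `𝒜₃` together with adjoined inverses `x₃⁻¹, z₃⁻¹`. -/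
inductive D3 : Type
  | w3 | x3 | z3 | xinv | zinv
deriving DecidableEq

/-- Relations of `𝒜₁⟨x₁⁻¹, y₁⁻¹⟩`. -/
inductive RelD1 (K : Type) [CommRing K] (t : Kˣ) :
    FreeAlgebra K D1 → FreeAlgebra K D1 → Prop
  | ryx : RelD1 K t (FreeAlgebra.ι K D1.y1 * FreeAlgebra.ι K D1.x1)
      ((((t⁻¹ : Kˣ) : K) ^ 3) • (FreeAlgebra.ι K D1.x1 * FreeAlgebra.ι K D1.y1))
  | rxw : RelD1 K t (FreeAlgebra.ι K D1.x1 * FreeAlgebra.ι K D1.w1)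
      ((((t⁻¹ : Kˣ) : K) ^ 3) • (FreeAlgebra.ι K D1.w1 * FreeAlgebra.ι K D1.x1))
  | rwy : RelD1 K t (FreeAlgebra.ι K D1.w1 * FreeAlgebra.ι K D1.y1)
      ((((t⁻¹ : Kˣ) : K) ^ 3) • (FreeAlgebra.ι K D1.y1 * FreeAlgebra.ι K D1.w1))
  | invx_left : RelD1 K t (FreeAlgebra.ι K D1.xinv * FreeAlgebra.ι K D1.x1) 1
  | invx_right : RelD1 K t (FreeAlgebra.ι K D1.x1 * FreeAlgebra.ι K D1.xinv) 1
  | invy_left : RelD1 K t (FreeAlgebra.ι K D1.yinv * FreeAlgebra.ι K D1.y1) 1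
  | invy_right : RelD1 K t (FreeAlgebra.ι K D1.y1 * FreeAlgebra.ι K D1.yinv) 1

/-- Relations of `𝒜₂⟨z₂⁻¹, y₂⁻¹⟩`. -/
inductive RelD2 (K : Type) [CommRing K] (t : Kˣ) :
    FreeAlgebra K D2 → FreeAlgebra K D2 → Prop
  | rzy : RelD2 K t (FreeAlgebra.ι K D2.z2 * FreeAlgebra.ι K D2.y2)
      ((((t⁻¹ : Kˣ) : K) ^ 3) • (FreeAlgebra.ι K D2.y2 * FreeAlgebra.ι K D2.z2))
  | ryw : RelD2 K t (FreeAlgebra.ι K D2.y2 * FreeAlgebra.ι K D2.w2)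
      ((((t⁻¹ : Kˣ) : K) ^ 3) • (FreeAlgebra.ι K D2.w2 * FreeAlgebra.ι K D2.y2))
  | rwz : RelD2 K t (FreeAlgebra.ι K D2.w2 * FreeAlgebra.ι K D2.z2)
      ((((t⁻¹ : Kˣ) : K) ^ 3) • (FreeAlgebra.ι K D2.z2 * FreeAlgebra.ι K D2.w2))
  | invz_left : RelD2 K t (FreeAlgebra.ι K D2.zinv * FreeAlgebra.ι K D2.z2) 1
  | invz_right : RelD2 K t (FreeAlgebra.ι K D2.z2 * FreeAlgebra.ι K D2.zinv) 1
  | invy_left : RelD2 K t (FreeAlgebra.ι K D2.yinv * FreeAlgebra.ι K D2.y2) 1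
  | invy_right : RelD2 K t (FreeAlgebra.ι K D2.y2 * FreeAlgebra.ι K D2.yinv) 1

/-- Relations of `𝒜₃⟨x₃⁻¹, z₃⁻¹⟩`. -/
inductive RelD3 (K : Type) [CommRing K] (t : Kˣ) :
    FreeAlgebra K D3 → FreeAlgebra K D3 → Prop
  | rxz : RelD3 K t (FreeAlgebra.ι K D3.x3 * FreeAlgebra.ι K D3.z3)
      ((((t⁻¹ : Kˣ) : K) ^ 3) • (FreeAlgebra.ι K D3.z3 * FreeAlgebra.ι K D3.x3))
  | rzw : RelD3 K t (FreeAlgebra.ι K D3.z3 * FreeAlgebra.ι K D3.w3)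
      ((((t⁻¹ : Kˣ) : K) ^ 3) • (FreeAlgebra.ι K D3.w3 * FreeAlgebra.ι K D3.z3))
  | rwx : RelD3 K t (FreeAlgebra.ι K D3.w3 * FreeAlgebra.ι K D3.x3)
      ((((t⁻¹ : Kˣ) : K) ^ 3) • (FreeAlgebra.ι K D3.x3 * FreeAlgebra.ι K D3.w3))
  | invx_left : RelD3 K t (FreeAlgebra.ι K D3.xinv * FreeAlgebra.ι K D3.x3) 1
  | invx_right : RelD3 K t (FreeAlgebra.ι K D3.x3 * FreeAlgebra.ι K D3.xinv) 1
  | invz_left : RelD3 K t (FreeAlgebra.ι K D3.zinv * FreeAlgebra.ι K D3.z3) 1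
  | invz_right : RelD3 K t (FreeAlgebra.ι K D3.z3 * FreeAlgebra.ι K D3.zinv) 1

/-- `𝒜₁⟨x₁⁻¹, y₁⁻¹⟩`. -/
abbrev B1 (K : Type) [CommRing K] (t : Kˣ) := RingQuot (RelD1 K t)
/-- `𝒜₂⟨z₂⁻¹, y₂⁻¹⟩`. -/
abbrev B2 (K : Type) [CommRing K] (t : Kˣ) := RingQuot (RelD2 K t)
/-- `𝒜₃⟨x₃⁻¹, z₃⁻¹⟩`. -/
abbrev B3 (K : Type) [CommRing K] (t : Kˣ) := RingQuot (RelD3 K t)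

/-- image of a generator in `𝒜₁⟨x₁⁻¹, y₁⁻¹⟩`. -/
def d1 (K : Type) [CommRing K] (t : Kˣ) (g : D1) : B1 K t :=
  RingQuot.mkAlgHom K (RelD1 K t) (FreeAlgebra.ι K g)

/-- image of a generator in `𝒜₂⟨z₂⁻¹, y₂⁻¹⟩`. -/
def d2 (K : Type) [CommRing K] (t : Kˣ) (g : D2) : B2 K t :=
  RingQuot.mkAlgHom K (RelD2 K t) (FreeAlgebra.ι K g)

/-- image of a generator in `𝒜₃⟨x₃⁻¹, z₃⁻¹⟩`. -/
def d3 (K : Type) [CommRing K] (t : Kˣ) (g : D3) : B3 K t :=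
  RingQuot.mkAlgHom K (RelD3 K t) (FreeAlgebra.ι K g)

section nc_aux
variable {R A : Type*} [CommRing R] [Ring A] [Algebra R A]

lemma aux_swap_pow {a b : A} {c : R} (h : a * b = c • (b * a)) :
    ∀ n : ℕ, a * b ^ n = c ^ n • (b ^ n * a)
  | 0 => by simp
  | n+1 => by
    rw [pow_succ, ← mul_assoc, aux_swap_pow h n, smul_mul_assoc, mul_assoc, h,
      mul_smul_comm, smul_smul, ← pow_succ, ← mul_assoc, ← pow_succ]

lemma aux_pow_swap {a b : A} {c : R} (h : a * b = c • (b * a)) :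
    ∀ n : ℕ, a ^ n * b = c ^ n • (b * a ^ n)
  | 0 => by simp
  | n+1 => by
    rw [pow_succ', mul_assoc, aux_pow_swap h n, mul_smul_comm, ← mul_assoc, h,
      smul_mul_assoc, smul_smul, ← pow_succ, mul_assoc, ← pow_succ']

lemma aux_pow_cancel {a b : A} (h : a * b = 1) : ∀ n : ℕ, a ^ n * b ^ n = 1
  | 0 => by simp
  | n+1 => by
    rw [pow_succ, pow_succ', mul_assoc, ← mul_assoc a, h, one_mul, aux_pow_cancel h n]

lemma aux_mul_pow3 {a b : A} {c : R} (h : b * a = c • (a * b)) :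
    (a * b) ^ 3 = (c ^ 3 : R) • (a ^ 3 * b ^ 3) := by
  have h' : ∀ x : A, b * (a * x) = c • (a * (b * x)) := fun x => by
    rw [← mul_assoc, h, smul_mul_assoc, mul_assoc]
  have e : (a * b) ^ 3 = a * (b * (a * (b * (a * b)))) := by
    rw [pow_succ, pow_succ, pow_one]; simp only [mul_assoc]
  rw [e]
  simp only [h', mul_smul_comm, smul_smul]
  congr 1
  · ring
  · simp [pow_succ, mul_assoc]

end nc_aux

/-- Cocycle condition for the noncommutative `K_{ℙ²}`: if
`G₂₁ : 𝒜₁⟨x₁⁻¹,y₁⁻¹⟩ → 𝒜₂⟨z₂⁻¹,y₂⁻¹⟩`, `G₃₂ : 𝒜₂⟨z₂⁻¹,y₂⁻¹⟩ → 𝒜₃⟨x₃⁻¹,z₃⁻¹⟩` and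
`G₁₃ : 𝒜₃⟨x₃⁻¹,z₃⁻¹⟩ → 𝒜₁⟨y₁⁻¹,x₁⁻¹⟩` are the (extended) transition homomorphisms, then
`G₁₃ ∘ G₃₂ ∘ G₂₁` is the identity on `𝒜₁⟨x₁⁻¹,y₁⁻¹⟩`; equivalently
`G₁₃(G₃₂(G₂₁(u))) = u` for `u ∈ {x₁, y₁, w₁}`.  Hence the three charts satisfy the cocycle
condition `G_{ij} ∘ G_{jk} = G_{ik}` with trivial gerbe terms. -/


theorem nc_KP2_cocycle (K : Type) [CommRing K] (s t : Kˣ)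
    (G21 : B1 K t →ₐ[K] B2 K t)
    (hG21x : G21 (d1 K t D1.x1)
      = (((s⁻¹ : Kˣ) : K) ^ 2 * ((t⁻¹ : Kˣ) : K)) • d2 K t D2.zinv)
    (hG21y : G21 (d1 K t D1.y1)
      = (((s⁻¹ : Kˣ) : K) * ((t⁻¹ : Kˣ) : K) ^ 2) • (d2 K t D2.y2 * d2 K t D2.zinv))
    (hG21w : G21 (d1 K t D1.w1)
      = (((s : Kˣ) : K) ^ 3 * ((t : Kˣ) : K) ^ 9) • (d2 K t D2.w2 * d2 K t D2.z2 ^ 3))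
    (G32 : B2 K t →ₐ[K] B3 K t)
    (hG32y : G32 (d2 K t D2.y2)
      = (((s⁻¹ : Kˣ) : K) ^ 2 * ((t⁻¹ : Kˣ) : K)) • d3 K t D3.xinv)
    (hG32z : G32 (d2 K t D2.z2)
      = (((s⁻¹ : Kˣ) : K) * ((t⁻¹ : Kˣ) : K) ^ 2) • (d3 K t D3.z3 * d3 K t D3.xinv))
    (hG32w : G32 (d2 K t D2.w2)
      = (((s : Kˣ) : K) ^ 3 * ((t : Kˣ) : K) ^ 9) • (d3 K t D3.w3 * d3 K t D3.x3 ^ 3))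
    (G13 : B3 K t →ₐ[K] B1 K t)
    (hG13z : G13 (d3 K t D3.z3)
      = (((s⁻¹ : Kˣ) : K) ^ 2 * ((t⁻¹ : Kˣ) : K)) • d1 K t D1.yinv)
    (hG13x : G13 (d3 K t D3.x3)
      = (((s⁻¹ : Kˣ) : K) * ((t⁻¹ : Kˣ) : K) ^ 2) • (d1 K t D1.x1 * d1 K t D1.yinv))
    (hG13w : G13 (d3 K t D3.w3)
      = (((s : Kˣ) : K) ^ 3 * ((t : Kˣ) : K) ^ 9) • (d1 K t D1.w1 * d1 K t D1.y1 ^ 3)) :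
    G13.comp (G32.comp G21) = AlgHom.id K (B1 K t)
    ∧ G13 (G32 (G21 (d1 K t D1.x1))) = d1 K t D1.x1
    ∧ G13 (G32 (G21 (d1 K t D1.y1))) = d1 K t D1.y1
    ∧ G13 (G32 (G21 (d1 K t D1.w1))) = d1 K t D1.w1 := by
  -- notation for scalars
  set S : K := ((s : Kˣ) : K) with hSdef
  set S' : K := ((s⁻¹ : Kˣ) : K) with hS'def
  set T : K := ((t : Kˣ) : K) with hTdef
  set T' : K := ((t⁻¹ : Kˣ) : K) with hT'def
  have hSS' : S' * S = 1 := Units.inv_mul s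
  have hTT' : T' * T = 1 := Units.inv_mul t
  -- generators
  set x1 := d1 K t D1.x1 with hx1def
  set y1 := d1 K t D1.y1 with hy1def
  set w1 := d1 K t D1.w1 with hw1def
  set xi1 := d1 K t D1.xinv with hxi1def
  set yi1 := d1 K t D1.yinv with hyi1def
  set z2 := d2 K t D2.z2 with hz2def
  set y2 := d2 K t D2.y2 with hy2def
  set w2 := d2 K t D2.w2 with hw2def
  set zi2 := d2 K t D2.zinv with hzi2def
  set x3 := d3 K t D3.x3 with hx3def
  set z3 := d3 K t D3.z3 with hz3def
  set w3 := d3 K t D3.w3 with hw3def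
  set xi3 := d3 K t D3.xinv with hxi3def
  set zi3 := d3 K t D3.zinv with hzi3def
  -- relations
  have hx1xi : x1 * xi1 = 1 := by
    simpa only [hx1def, hxi1def, d1, map_mul, map_one] using
      RingQuot.mkAlgHom_rel K (RelD1.invx_right (K := K) (t := t))
  have hxix1 : xi1 * x1 = 1 := by
    simpa only [hx1def, hxi1def, d1, map_mul, map_one] using
      RingQuot.mkAlgHom_rel K (RelD1.invx_left (K := K) (t := t))
  have hy1yi : y1 * yi1 = 1 := by
    simpa only [hy1def, hyi1def, d1, map_mul, map_one] using
      RingQuot.mkAlgHom_rel K (RelD1.invy_right (K := K) (t := t))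
  have hyiy1 : yi1 * y1 = 1 := by
    simpa only [hy1def, hyi1def, d1, map_mul, map_one] using
      RingQuot.mkAlgHom_rel K (RelD1.invy_left (K := K) (t := t))
  have hz2zi : z2 * zi2 = 1 := by
    simpa only [hz2def, hzi2def, d2, map_mul, map_one] using
      RingQuot.mkAlgHom_rel K (RelD2.invz_right (K := K) (t := t))
  have hziz2 : zi2 * z2 = 1 := by
    simpa only [hz2def, hzi2def, d2, map_mul, map_one] using
      RingQuot.mkAlgHom_rel K (RelD2.invz_left (K := K) (t := t))
  have hx3xi : x3 * xi3 = 1 := by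
    simpa only [hx3def, hxi3def, d3, map_mul, map_one] using
      RingQuot.mkAlgHom_rel K (RelD3.invx_right (K := K) (t := t))
  have hxix3 : xi3 * x3 = 1 := by
    simpa only [hx3def, hxi3def, d3, map_mul, map_one] using
      RingQuot.mkAlgHom_rel K (RelD3.invx_left (K := K) (t := t))
  have hz3zi : z3 * zi3 = 1 := by
    simpa only [hz3def, hzi3def, d3, map_mul, map_one] using
      RingQuot.mkAlgHom_rel K (RelD3.invz_right (K := K) (t := t))
  have hziz3 : zi3 * z3 = 1 := by
    simpa only [hz3def, hzi3def, d3, map_mul, map_one] using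
      RingQuot.mkAlgHom_rel K (RelD3.invz_left (K := K) (t := t))
  have hcom : x3 * z3 = (T' ^ 3) • (z3 * x3) := by
    simpa only [hx3def, hz3def, hT'def, d3, map_mul, map_smul] using
      RingQuot.mkAlgHom_rel K (RelD3.rxz (K := K) (t := t))
  -- reversed commutation
  have hTT'3 : T ^ 3 * T' ^ 3 = 1 := by
    rw [← mul_pow, mul_comm, hTT', one_pow]
  have h1 : z3 * xi3 = T' ^ 3 • (xi3 * z3) := by
    calc z3 * xi3 = xi3 * (x3 * z3) * xi3 := by
          rw [← mul_assoc, hxix3, one_mul]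
      _ = xi3 * ((T' ^ 3) • (z3 * x3)) * xi3 := by rw [hcom]
      _ = T' ^ 3 • (xi3 * z3 * (x3 * xi3)) := by
          rw [mul_smul_comm, smul_mul_assoc]; congr 1; simp only [mul_assoc]
      _ = T' ^ 3 • (xi3 * z3) := by rw [hx3xi, mul_one]
  have hcom' : xi3 * z3 = T ^ 3 • (z3 * xi3) := by
    rw [h1, smul_smul, hTT'3, one_smul]
  -- G32 of zinv
  have e1 : G32 zi2 * G32 z2 = 1 := by rw [← map_mul, hziz2, map_one]
  have e2 : G32 z2 * ((S * T ^ 2) • (x3 * zi3)) = 1 := by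
    rw [hG32z, smul_mul_assoc, mul_smul_comm, smul_smul]
    have hin : z3 * xi3 * (x3 * zi3) = 1 := by
      rw [mul_assoc, ← mul_assoc xi3, hxix3, one_mul, hz3zi]
    rw [hin]
    have hsc : S' * T' ^ 2 * (S * T ^ 2) = 1 := by
      have : S' * T' ^ 2 * (S * T ^ 2) = (S' * S) * (T' * T) ^ 2 := by ring
      rw [this, hSS', hTT', one_pow, mul_one]
    rw [hsc, one_smul]
  have hG32zi : G32 zi2 = (S * T ^ 2) • (x3 * zi3) := left_inv_eq_right_inv e1 e2
  -- G13 of zinv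
  have f1 : G13 zi3 * G13 z3 = 1 := by rw [← map_mul, hziz3, map_one]
  have f2 : G13 z3 * ((S ^ 2 * T) • y1) = 1 := by
    rw [hG13z, smul_mul_assoc, mul_smul_comm, smul_smul, hyiy1]
    have hsc : S' ^ 2 * T' * (S ^ 2 * T) = 1 := by
      have : S' ^ 2 * T' * (S ^ 2 * T) = (S' * S) ^ 2 * (T' * T) := by ring
      rw [this, hSS', hTT', one_pow, mul_one]
    rw [hsc, one_smul]
  have hG13zi : G13 zi3 = (S ^ 2 * T) • y1 := left_inv_eq_right_inv f1 f2
  -- F(x1)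
  have hFx : G13 (G32 (G21 x1)) = x1 := by
    rw [hG21x, map_smul, hG32zi, map_smul, map_smul, map_mul, hG13x, hG13zi]
    simp only [smul_mul_assoc, mul_smul_comm, smul_smul]
    rw [mul_assoc x1, hyiy1, mul_one]
    conv_rhs => rw [← one_smul K x1]
    congr 1
    trans (S' * S) ^ 3 * (T' * T) ^ 3
    · ring
    · rw [hSS', hTT']; norm_num
  -- F(y1)
  have hFy : G13 (G32 (G21 y1)) = y1 := by
    rw [hG21y, map_smul, map_mul, hG32y, hG32zi]
    simp only [smul_mul_assoc, mul_smul_comm, smul_smul]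
    rw [← mul_assoc xi3, hxix3, one_mul]
    rw [map_smul, hG13zi, smul_smul]
    conv_rhs => rw [← one_smul K y1]
    congr 1
    trans (S' * S) ^ 3 * (T' * T) ^ 3
    · ring
    · rw [hSS', hTT']; norm_num
  -- F(w1)
  have hx3z3 : x3 * z3 ^ 3 = (T' ^ 3) ^ 3 • (z3 ^ 3 * x3) := aux_swap_pow hcom 3
  have hx33z33 : x3 ^ 3 * z3 ^ 3 = ((T' ^ 3) ^ 3) ^ 3 • (z3 ^ 3 * x3 ^ 3) :=
    aux_pow_swap hx3z3 3
  have hx3xi3 : x3 ^ 3 * xi3 ^ 3 = 1 := aux_pow_cancel hx3xi 3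
  have hy3yi3 : y1 ^ 3 * yi1 ^ 3 = 1 := aux_pow_cancel hy1yi 3
  have hzxi3 : (z3 * xi3) ^ 3 = (T ^ 3) ^ 3 • (z3 ^ 3 * xi3 ^ 3) := aux_mul_pow3 hcom'
  have hinner : (w3 * x3 ^ 3) * (z3 ^ 3 * xi3 ^ 3) = ((T' ^ 3) ^ 3) ^ 3 • (w3 * z3 ^ 3) := by
    calc (w3 * x3 ^ 3) * (z3 ^ 3 * xi3 ^ 3) = w3 * ((x3 ^ 3 * z3 ^ 3) * xi3 ^ 3) := by
          simp only [mul_assoc]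
      _ = w3 * ((((T' ^ 3) ^ 3) ^ 3 • (z3 ^ 3 * x3 ^ 3)) * xi3 ^ 3) := by rw [hx33z33]
      _ = ((T' ^ 3) ^ 3) ^ 3 • (w3 * (z3 ^ 3 * (x3 ^ 3 * xi3 ^ 3))) := by
          rw [smul_mul_assoc, mul_smul_comm]; congr 1; simp only [mul_assoc]
      _ = ((T' ^ 3) ^ 3) ^ 3 • (w3 * z3 ^ 3) := by rw [hx3xi3, mul_one]
  have hFw : G13 (G32 (G21 w1)) = w1 := by
    rw [hG21w, map_smul, map_mul, map_pow, hG32w, hG32z, smul_pow, hzxi3, smul_smul]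
    simp only [smul_mul_assoc, mul_smul_comm, smul_smul]
    rw [hinner]
    rw [map_smul, map_smul, map_mul, map_pow, hG13w, hG13z, smul_pow, smul_mul_assoc,
      mul_smul_comm, smul_smul, smul_smul, smul_smul]
    rw [mul_assoc w1, hy3yi3, mul_one]
    conv_rhs => rw [← one_smul K w1]
    congr 1
    trans (S' * S) ^ 9 * (T' * T) ^ 36
    · ring
    · rw [hSS', hTT']; norm_num
  -- F on the inverses
  have hFxi : G13 (G32 (G21 xi1)) = xi1 := by
    have h1 : G13 (G32 (G21 xi1)) * G13 (G32 (G21 x1)) = 1 := by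
      rw [← map_mul, ← map_mul, ← map_mul, hxix1, map_one, map_one, map_one]
    rw [hFx] at h1
    exact left_inv_eq_right_inv h1 hx1xi
  have hFyi : G13 (G32 (G21 yi1)) = yi1 := by
    have h1 : G13 (G32 (G21 yi1)) * G13 (G32 (G21 y1)) = 1 := by
      rw [← map_mul, ← map_mul, ← map_mul, hyiy1, map_one, map_one, map_one]
    rw [hFy] at h1
    exact left_inv_eq_right_inv h1 hy1yi
  refine ⟨?_, hFx, hFy, hFw⟩
  apply RingQuot.ringQuot_ext'
  apply FreeAlgebra.hom_ext
  funext g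
  cases g <;>
    simp only [Function.comp_apply, AlgHom.comp_apply, AlgHom.id_apply]
  · exact hFw
  · exact hFy
  · exact hFx
  · exact hFxi
  · exact hFyi
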